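/- (Bol's identity) For any γ ∈ SL(2,ℂ), any sufficiently differentiable function f, and any integer h > 0, the (h−1)-st derivative of f|_{2−h} γ equals (∂_z^{h-1} f)|_h γ; that is, ∂_z^{h-1}((cz+d)^{h-2} f((az+b)/(cz+d))) = (cz+d)^{-h} f^{(h-1)}((az+b)/(cz+d)). -/

import Mathlib

/-- The homographic action of `γ = (a b; c d) ∈ SL(2,ℂ)`: `z ↦ (az+b)/(cz+d)`. -/
noncomputable def mact (γ : Matrix.SpecialLinearGroup (Fin 2) ℂ) (z : ℂ) : ℂ :=
  (γ.1 0 0 * z + γ.1 0 1) / (γ.1 1 0 * z + γ.1 1 1)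

/-- The automorphy factor `cz + d` for `γ = (a b; c d) ∈ SL(2,ℂ)`. -/
noncomputable def mden (γ : Matrix.SpecialLinearGroup (Fin 2) ℂ) (z : ℂ) : ℂ :=
  γ.1 1 0 * z + γ.1 1 1

/-- Falling factorial `x (x-1) ⋯ (x-n+1)` in `ℤ`. -/
def ffac (x : ℤ) : ℕ → ℤ
  | 0 => 1
  | n + 1 => ffac x n * (x - n)

lemma ffac_zero (x : ℤ) : ffac x 0 = 1 := rfl

lemma ffac_succ (x : ℤ) (n : ℕ) : ffac x (n + 1) = ffac x n * (x - n) := rfl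

lemma ffac_succ_left (x : ℤ) (n : ℕ) : ffac (x + 1) (n + 1) = (x + 1) * ffac x n := by
  induction n with
  | zero => simp [ffac]
  | succ n ih =>
    rw [ffac_succ, ih, ffac_succ]
    push_cast
    ring

lemma ffac_eq_zero {x : ℤ} {n : ℕ} (h0 : 0 ≤ x) (hn : x < n) : ffac x n = 0 := by
  induction n with
  | zero => omega
  | succ n ih =>
    rw [ffac_succ]
    rcases lt_or_ge x n with h | h
    · rw [ih h]; ring
    · have : x = n := by omega
      rw [this]; ring

/-- The key coefficient identity for the induction step in Bol's identity. -/
lemma coeffId (x : ℤ) (m s : ℕ) (hs : s ≤ m) :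
    (m.choose (s + 1) : ℤ) * ffac (x - (s + 1)) (m - (s + 1)) * (x - m - (s + 1))
      + (m.choose s : ℤ) * ffac (x - s) (m - s)
      = ((m + 1).choose (s + 1) : ℤ) * ffac (x - (s + 1)) (m + 1 - (s + 1)) := by
  rcases eq_or_lt_of_le hs with rfl | hlt
  · simp [Nat.choose_succ_self, ffac_zero]
  · obtain ⟨n, rfl⟩ : ∃ n, m = n + s + 1 := ⟨m - s - 1, by omega⟩
    have h1 : n + s + 1 - (s + 1) = n := by omega
    have h2 : n + s + 1 - s = n + 1 := by omega
    have h3 : n + s + 1 + 1 - (s + 1) = n + 1 := by omega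
    rw [h1, h2, h3]
    have hl : x - s = (x - (s + 1)) + 1 := by ring
    have e1 : ffac (x - s) (n + 1) = (x - (s + 1) + 1) * ffac (x - (s + 1)) n := by
      rw [hl, ffac_succ_left]
    have e2 : ffac (x - (s + 1)) (n + 1) = ffac (x - (s + 1)) n * (x - (s + 1) - n) :=
      ffac_succ _ _
    rw [e1, e2]
    have hp : ((n + s + 1 + 1).choose (s + 1) : ℤ)
        = (n + s + 1).choose s + (n + s + 1).choose (s + 1) := by
      exact_mod_cast congrArg (Nat.cast (R := ℤ)) (Nat.choose_succ_succ (n + s + 1) s)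
    have hr : ((n + s + 1).choose (s + 1) : ℤ) * (s + 1)
        = (n + s + 1).choose s * (n + 1) := by
      have := Nat.choose_succ_right_eq (n + s + 1) s
      have h4 : n + s + 1 - s = n + 1 := by omega
      rw [h4] at this
      exact_mod_cast congrArg (Nat.cast (R := ℤ)) this
    rw [hp]
    push_cast
    linear_combination (-(ffac (x - ((s : ℤ) + 1)) n)) * hr

lemma mden_hasDerivAt (γ : Matrix.SpecialLinearGroup (Fin 2) ℂ) (z : ℂ) :
    HasDerivAt (mden γ) (γ.1 1 0) z := by
  show HasDerivAt (fun w => γ.1 1 0 * w + γ.1 1 1) _ z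
  simpa using ((hasDerivAt_id z).const_mul (γ.1 1 0)).add_const (γ.1 1 1)

lemma mact_hasDerivAt (γ : Matrix.SpecialLinearGroup (Fin 2) ℂ) (z : ℂ) (hz : mden γ z ≠ 0) :
    HasDerivAt (mact γ) ((mden γ z) ^ (-2 : ℤ)) z := by
  have hdet : γ.1 0 0 * γ.1 1 1 - γ.1 0 1 * γ.1 1 0 = 1 := by
    have := γ.2
    rwa [Matrix.det_fin_two] at this
  have hnum : HasDerivAt (fun w => γ.1 0 0 * w + γ.1 0 1) (γ.1 0 0) z := by
    simpa using ((hasDerivAt_id z).const_mul (γ.1 0 0)).add_const (γ.1 0 1)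
  have := (hnum.div (mden_hasDerivAt γ z) hz)
  have heq : (γ.1 0 0 * mden γ z - (γ.1 0 0 * z + γ.1 0 1) * γ.1 1 0) / mden γ z ^ 2
      = (mden γ z) ^ (-2 : ℤ) := by
    have : γ.1 0 0 * mden γ z - (γ.1 0 0 * z + γ.1 0 1) * γ.1 1 0 = 1 := by
      simp only [mden]; linear_combination hdet
    rw [this, zpow_neg, one_div]
    norm_cast
  rw [← heq]
  exact this

lemma term_step (x : ℤ) (m i : ℕ) (hi : i ≤ m) (C J : ℂ) (hJ : J ≠ 0) (u : ℕ → ℂ) :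
    (m.choose (i + 1) : ℂ) * ((ffac (x - (i + 1 : ℕ)) (m - (i + 1)) : ℤ) : ℂ) * C ^ (m - (i + 1)) *
        (((x - (m : ℕ) - (i + 1 : ℕ) : ℤ) : ℂ) * J ^ (x - (m : ℕ) - (i + 1 : ℕ) - 1) * C) *
          u (i + 1)
      + (m.choose i : ℂ) * ((ffac (x - (i : ℕ)) (m - i) : ℤ) : ℂ) * C ^ (m - i) *
          J ^ (x - (m : ℕ) - (i : ℕ)) * (u (i + 1) * J ^ (-2 : ℤ))
      = ((m + 1).choose (i + 1) : ℂ) * ((ffac (x - (i + 1 : ℕ)) (m + 1 - (i + 1)) : ℤ) : ℂ) *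
          C ^ (m + 1 - (i + 1)) * J ^ (x - (m + 1 : ℕ) - (i + 1 : ℕ)) * u (i + 1) := by
  have jinv : J ^ (2 : ℤ) * J ^ (-2 : ℤ) = 1 := by
    rw [← zpow_add₀ hJ]; norm_num
  rcases eq_or_lt_of_le hi with rfl | hlt
  · simp only [Nat.choose_succ_self, Nat.cast_zero, zero_mul, zero_add, Nat.sub_self,
      Nat.choose_self, ffac_zero, pow_zero, Int.cast_one, Nat.cast_one, one_mul, mul_one]
    have j2 : J ^ (x - (i : ℕ) - (i : ℕ)) = J ^ (x - (i + 1 : ℕ) - (i + 1 : ℕ)) * J ^ (2 : ℤ) := by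
      rw [← zpow_add₀ hJ]; congr 1; push_cast; ring
    rw [j2]
    linear_combination (J ^ (x - ((i + 1 : ℕ) : ℤ) - ((i + 1 : ℕ) : ℤ)) * u (i + 1)) * jinv
  · obtain ⟨n, rfl⟩ : ∃ n, m = n + i + 1 := ⟨m - i - 1, by omega⟩
    have e1 : n + i + 1 - (i + 1) = n := by omega
    have e2 : n + i + 1 - i = n + 1 := by omega
    have e3 : n + i + 1 + 1 - (i + 1) = n + 1 := by omega
    rw [e1, e2, e3]
    have j1 : J ^ (x - (n + i + 1 : ℕ) - (i + 1 : ℕ) - 1)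
        = J ^ (x - (n + i + 1 + 1 : ℕ) - (i + 1 : ℕ)) := by
      congr 1; push_cast; ring
    have j2 : J ^ (x - (n + i + 1 : ℕ) - (i : ℕ))
        = J ^ (x - (n + i + 1 + 1 : ℕ) - (i + 1 : ℕ)) * J ^ (2 : ℤ) := by
      rw [← zpow_add₀ hJ]; congr 1; push_cast; ring
    rw [j1, j2]
    have key := coeffId x (n + i + 1) i (by omega)
    rw [e1, e2, e3] at key
    have keyC : (((n + i + 1).choose (i + 1) : ℕ) : ℂ) * ((ffac (x - (i + 1 : ℕ)) n : ℤ) : ℂ) *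
          ((x - (n + i + 1 : ℕ) - (i + 1 : ℕ) : ℤ) : ℂ)
        + (((n + i + 1).choose i : ℕ) : ℂ) * ((ffac (x - (i : ℕ)) (n + 1) : ℤ) : ℂ)
        = (((n + i + 1 + 1).choose (i + 1) : ℕ) : ℂ) *
            ((ffac (x - (i + 1 : ℕ)) (n + 1) : ℤ) : ℂ) := by
      have hc := congrArg (fun t : ℤ => (t : ℂ)) key
      push_cast at hc ⊢
      convert hc using 2
    linear_combination
      (C ^ (n + 1) * J ^ (x - ((n + i + 1 + 1 : ℕ) : ℤ) - ((i + 1 : ℕ) : ℤ)) * u (i + 1)) * keyC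
      + ((((n + i + 1).choose i : ℕ) : ℂ) * ((ffac (x - (i : ℕ)) (n + 1) : ℤ) : ℂ) * C ^ (n + 1) *
          J ^ (x - ((n + i + 1 + 1 : ℕ) : ℤ) - ((i + 1 : ℕ) : ℤ)) * u (i + 1)) * jinv

lemma sum_step (x : ℤ) (m : ℕ) (C J : ℂ) (hJ : J ≠ 0) (u : ℕ → ℂ) :
    ∑ r ∈ Finset.range (m + 1),
      ((m.choose r : ℂ) * ((ffac (x - r) (m - r) : ℤ) : ℂ) * C ^ (m - r) *
          (((x - (m : ℕ) - (r : ℕ) : ℤ) : ℂ) * J ^ (x - (m : ℕ) - (r : ℕ) - 1) * C) * u r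
        + (m.choose r : ℂ) * ((ffac (x - r) (m - r) : ℤ) : ℂ) * C ^ (m - r) *
            J ^ (x - (m : ℕ) - (r : ℕ)) * (u (r + 1) * J ^ (-2 : ℤ)))
      = ∑ r ∈ Finset.range (m + 2),
          ((m + 1).choose r : ℂ) * ((ffac (x - r) (m + 1 - r) : ℤ) : ℂ) * C ^ (m + 1 - r) *
            J ^ (x - (m + 1 : ℕ) - (r : ℕ)) * u r := by
  rw [Finset.sum_add_distrib]
  conv_rhs => rw [Finset.sum_range_succ' _ (m + 1)]
  conv_lhs => rw [Finset.sum_range_succ' _ m]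
  have hP0 : ((m.choose 0 : ℂ) * ((ffac (x - (0 : ℕ)) (m - 0) : ℤ) : ℂ) * C ^ (m - 0) *
        (((x - (m : ℕ) - ((0 : ℕ) : ℕ) : ℤ) : ℂ) * J ^ (x - (m : ℕ) - ((0 : ℕ) : ℕ) - 1) * C) *
        u 0)
      = ((m + 1).choose 0 : ℂ) * ((ffac (x - (0 : ℕ)) (m + 1 - 0) : ℤ) : ℂ) * C ^ (m + 1 - 0) *
          J ^ (x - (m + 1 : ℕ) - ((0 : ℕ) : ℕ)) * u 0 := by
    have hff : ffac (x - (0 : ℕ)) (m + 1 - 0)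
        = ffac (x - (0 : ℕ)) (m - 0) * (x - (0 : ℕ) - m) := by
      simp only [Nat.sub_zero]
      exact ffac_succ _ _
    have hJ1 : J ^ (x - (m : ℕ) - ((0 : ℕ) : ℕ) - 1) = J ^ (x - (m + 1 : ℕ) - ((0 : ℕ) : ℕ)) := by
      congr 1; push_cast; ring
    rw [hff, hJ1]
    simp only [Nat.sub_zero, Nat.choose_zero_right]
    push_cast
    ring
  have hext : ∑ i ∈ Finset.range m,
        ((m.choose (i + 1) : ℂ) * ((ffac (x - (i + 1 : ℕ)) (m - (i + 1)) : ℤ) : ℂ) *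
          C ^ (m - (i + 1)) *
          (((x - (m : ℕ) - (i + 1 : ℕ) : ℤ) : ℂ) * J ^ (x - (m : ℕ) - (i + 1 : ℕ) - 1) * C) *
          u (i + 1))
      = ∑ i ∈ Finset.range (m + 1),
        ((m.choose (i + 1) : ℂ) * ((ffac (x - (i + 1 : ℕ)) (m - (i + 1)) : ℤ) : ℂ) *
          C ^ (m - (i + 1)) *
          (((x - (m : ℕ) - (i + 1 : ℕ) : ℤ) : ℂ) * J ^ (x - (m : ℕ) - (i + 1 : ℕ) - 1) * C) *
          u (i + 1)) := by
    rw [Finset.sum_range_succ, Nat.choose_succ_self]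
    norm_num
  rw [hext, hP0]
  have hmain : ∑ i ∈ Finset.range (m + 1),
        ((m.choose (i + 1) : ℂ) * ((ffac (x - (i + 1 : ℕ)) (m - (i + 1)) : ℤ) : ℂ) *
            C ^ (m - (i + 1)) *
            (((x - (m : ℕ) - (i + 1 : ℕ) : ℤ) : ℂ) * J ^ (x - (m : ℕ) - (i + 1 : ℕ) - 1) * C) *
            u (i + 1)
          + (m.choose i : ℂ) * ((ffac (x - (i : ℕ)) (m - i) : ℤ) : ℂ) * C ^ (m - i) *
              J ^ (x - (m : ℕ) - (i : ℕ)) * (u (i + 1) * J ^ (-2 : ℤ)))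
      = ∑ i ∈ Finset.range (m + 1),
          ((m + 1).choose (i + 1) : ℂ) * ((ffac (x - (i + 1 : ℕ)) (m + 1 - (i + 1)) : ℤ) : ℂ) *
            C ^ (m + 1 - (i + 1)) * J ^ (x - (m + 1 : ℕ) - (i + 1 : ℕ)) * u (i + 1) :=
    Finset.sum_congr rfl fun i hi =>
      term_step x m i (by rw [Finset.mem_range] at hi; omega) C J hJ u
  rw [Finset.sum_add_distrib] at hmain
  linear_combination hmain

theorem bol_key (γ : Matrix.SpecialLinearGroup (Fin 2) ℂ) (f : ℂ → ℂ)
    (hf : Differentiable ℂ f) (h : ℕ) (m : ℕ) :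
    ∀ z : ℂ, mden γ z ≠ 0 →
      iteratedDeriv m (fun w => (mden γ w) ^ ((h : ℤ) - 2) * f (mact γ w)) z =
        ∑ r ∈ Finset.range (m + 1),
          (m.choose r : ℂ) * ((ffac ((h : ℤ) - 2 - r) (m - r) : ℤ) : ℂ) * (γ.1 1 0) ^ (m - r) *
            (mden γ z) ^ ((h : ℤ) - 2 - m - r) * iteratedDeriv r f (mact γ z) := by
  induction m with
  | zero =>
    intro z hz
    simp [iteratedDeriv_zero, ffac_zero]
  | succ m ih =>
    intro z hz
    have hdA : ∀ r : ℕ, HasDerivAt (fun w => iteratedDeriv r f (mact γ w))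
        (iteratedDeriv (r + 1) f (mact γ z) * (mden γ z) ^ (-2 : ℤ)) z := by
      intro r
      have hd : DifferentiableAt ℂ (iteratedDeriv r f) (mact γ z) :=
        (ContDiff.differentiable_iteratedDeriv r (hf.contDiff (n := (⊤ : WithTop ℕ∞)))
          (by simp)) (mact γ z)
      have h1 : HasDerivAt (iteratedDeriv r f) (iteratedDeriv (r + 1) f (mact γ z))
          (mact γ z) := by
        rw [iteratedDeriv_succ]
        exact hd.hasDerivAt
      exact h1.comp z (mact_hasDerivAt γ z hz)
    have hU : IsOpen {w : ℂ | mden γ w ≠ 0} := by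
      have hc : Continuous (mden γ) := by
        have : mden γ = fun w => γ.1 1 0 * w + γ.1 1 1 := rfl
        rw [this]; continuity
      exact isOpen_ne_fun hc continuous_const
    have hev : (iteratedDeriv m (fun w => (mden γ w) ^ ((h : ℤ) - 2) * f (mact γ w))) =ᶠ[nhds z]
        (fun w => ∑ r ∈ Finset.range (m + 1),
          (m.choose r : ℂ) * ((ffac ((h : ℤ) - 2 - r) (m - r) : ℤ) : ℂ) * (γ.1 1 0) ^ (m - r) *
            (mden γ w) ^ ((h : ℤ) - 2 - m - r) * iteratedDeriv r f (mact γ w)) :=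
      Filter.eventuallyEq_of_mem (hU.mem_nhds hz) fun w hw => ih w hw
    rw [iteratedDeriv_succ, hev.deriv_eq]
    have hS : HasDerivAt
        (fun w => ∑ r ∈ Finset.range (m + 1),
          (m.choose r : ℂ) * ((ffac ((h : ℤ) - 2 - r) (m - r) : ℤ) : ℂ) * (γ.1 1 0) ^ (m - r) *
            (mden γ w) ^ ((h : ℤ) - 2 - m - r) * iteratedDeriv r f (mact γ w))
        (∑ r ∈ Finset.range (m + 1),
          ((m.choose r : ℂ) * ((ffac ((h : ℤ) - 2 - r) (m - r) : ℤ) : ℂ) * (γ.1 1 0) ^ (m - r) *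
            ((((h : ℤ) - 2 - m - r : ℤ) : ℂ) * (mden γ z) ^ ((h : ℤ) - 2 - m - r - 1) *
              (γ.1 1 0)) * iteratedDeriv r f (mact γ z)
          + (m.choose r : ℂ) * ((ffac ((h : ℤ) - 2 - r) (m - r) : ℤ) : ℂ) * (γ.1 1 0) ^ (m - r) *
              (mden γ z) ^ ((h : ℤ) - 2 - m - r) *
              (iteratedDeriv (r + 1) f (mact γ z) * (mden γ z) ^ (-2 : ℤ)))) z := by
      apply HasDerivAt.fun_sum
      intro r hr
      have hpow : HasDerivAt (fun w => (mden γ w) ^ ((h : ℤ) - 2 - m - r))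
          (((((h : ℤ) - 2 - m - r : ℤ) : ℂ)) * (mden γ z) ^ ((h : ℤ) - 2 - m - r - 1) *
            (γ.1 1 0)) z := by
        have := (hasDerivAt_zpow ((h : ℤ) - 2 - m - r) (mden γ z) (Or.inl hz)).comp z
          (mden_hasDerivAt γ z)
        simpa [Function.comp_def] using this
      exact (hpow.const_mul _).mul (hdA r)
    rw [hS.deriv]
    exact sum_step ((h : ℤ) - 2) m (γ.1 1 0) (mden γ z) hz
      (fun r => iteratedDeriv r f (mact γ z))

theorem stmt11 (γ : Matrix.SpecialLinearGroup (Fin 2) ℂ) (f : ℂ → ℂ)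
    (hf : Differentiable ℂ f) (h : ℕ) (hh : 0 < h) (z : ℂ) (hz : mden γ z ≠ 0) :
    iteratedDeriv (h - 1) (fun w => (mden γ w) ^ ((h : ℤ) - 2) * f (mact γ w)) z =
      (mden γ z) ^ (-(h : ℤ)) * iteratedDeriv (h - 1) f (mact γ z) := by
  obtain ⟨k, rfl⟩ : ∃ k, h = k + 1 := ⟨h - 1, by omega⟩
  have hk : k + 1 - 1 = k := by omega
  rw [hk, bol_key γ f hf (k + 1) k z hz, Finset.sum_range_succ]
  have hzero : ∑ r ∈ Finset.range k,
      (k.choose r : ℂ) * ((ffac (((k + 1 : ℕ) : ℤ) - 2 - r) (k - r) : ℤ) : ℂ) *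
        (γ.1 1 0) ^ (k - r) * (mden γ z) ^ (((k + 1 : ℕ) : ℤ) - 2 - k - r) *
        iteratedDeriv r f (mact γ z) = 0 := by
    apply Finset.sum_eq_zero
    intro r hr
    rw [Finset.mem_range] at hr
    have hz0 : ffac (((k + 1 : ℕ) : ℤ) - 2 - r) (k - r) = 0 := by
      apply ffac_eq_zero <;> push_cast <;> omega
    rw [hz0]
    push_cast
    ring
  rw [hzero, zero_add]
  have he : (((k + 1 : ℕ) : ℤ) - 2 - (k : ℕ) - (k : ℕ)) = -((k + 1 : ℕ) : ℤ) := by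
    push_cast; ring
  rw [Nat.sub_self, Nat.choose_self, ffac_zero, pow_zero, he]
  push_cast
  ring
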